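/- Let L ≥ 0 and n ∈ ℕ, and let 0ₙ denote the origin of ℝⁿ. Suppose f(s; μ₁,…,μₙ) ∈ F_L^∞(0ₙ) satisfies f(s; μ₁,…,μ_{k−1}, 0,…,0) ≡ 0 for some k ∈ {1,2,…,n} (i.e., f vanishes identically whenever the last n−k+1 parameter variables are zero). Then there exist functions f_k,…,f_n ∈ F_L^∞(0ₙ) such that f = Σ_{i=k}^{n} μ_i·f_i. -/

import Mathlib

open Topology Filter Set
set_option maxHeartbeats 1000000
set_option synthInstance.maxHeartbeats 400000

/-- Partial derivative of `ψ(s;μ)` with respect to the variable `s`. -/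
noncomputable def pderivS {N : ℕ} (ψ : ℝ → (Fin N → ℝ) → ℝ) : ℝ → (Fin N → ℝ) → ℝ :=
  fun s μ => deriv (fun t => ψ t μ) s

/-- Partial derivative of `ψ(s;μ)` with respect to the parameter `μ j`. -/
noncomputable def pderivMu {N : ℕ} (j : Fin N) (ψ : ℝ → (Fin N → ℝ) → ℝ) :
    ℝ → (Fin N → ℝ) → ℝ :=
  fun s μ => deriv (fun t => ψ s (Function.update μ j t)) (μ j)

/-- Iterated partial derivative `∂_s^{l₀} ∂_{μ₁}^{l 0} ⋯ ∂_{μ_N}^{l (N-1)} ψ`. -/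
noncomputable def pderivMulti {N : ℕ} (l₀ : ℕ) (l : Fin N → ℕ)
    (ψ : ℝ → (Fin N → ℝ) → ℝ) : ℝ → (Fin N → ℝ) → ℝ :=
  pderivS^[l₀] (((List.ofFn fun j : Fin N => (pderivMu j)^[l j]).foldr (· ∘ ·) id) ψ)

/-- The class `F_L^∞(μ₀)` of functions `(L,∞)`-flat with respect to `s` at `μ₀`. -/
def MemF {N : ℕ} (L : ℝ) (μ₀ : Fin N → ℝ) (ψ : ℝ → (Fin N → ℝ) → ℝ) : Prop :=
  (∃ s₁ > (0 : ℝ), ∃ V : Set (Fin N → ℝ), IsOpen V ∧ μ₀ ∈ V ∧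
    ContDiffOn ℝ (⊤ : ℕ∞) (fun q : ℝ × (Fin N → ℝ) => ψ q.1 q.2) (Ioo 0 s₁ ×ˢ V)) ∧
  ∀ (l₀ : ℕ) (l : Fin N → ℕ), ∃ V ∈ 𝓝 μ₀, ∃ C : ℝ, ∃ s₀ > (0 : ℝ),
    ∀ s ∈ Ioo (0 : ℝ) s₀, ∀ μ ∈ V,
      |pderivMulti l₀ l ψ s μ| ≤ C * s ^ (L - (l₀ : ℝ))

section Aux
open MeasureTheory

variable {n : ℕ}

/-- The weight: `t` on "tail" coordinates (those `j` with `k - 1 ≤ j`), `1` on head ones. -/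
def tw (k : ℕ) (t : ℝ) (j : Fin n) : ℝ := if k - 1 ≤ (j : ℕ) then t else 1

lemma continuous_tw (k : ℕ) (j : Fin n) : Continuous fun t : ℝ => tw k t j := by
  unfold tw; split <;> continuity

lemma abs_tw_le (k : ℕ) {t : ℝ} (ht : t ∈ Icc (0:ℝ) 1) (j : Fin n) : |tw k t j| ≤ 1 := by
  unfold tw; split
  · rw [abs_of_nonneg ht.1]; exact ht.2
  · simp

/-- The scaling map `μ ↦ (head μ, t • tail μ)` as a continuous linear map. -/
noncomputable def scaleL (k : ℕ) (t : ℝ) : (Fin n → ℝ) →L[ℝ] (Fin n → ℝ) :=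
  ContinuousLinearMap.pi fun j => tw k t j • ContinuousLinearMap.proj j

lemma scaleL_apply (k : ℕ) (t : ℝ) (μ : Fin n → ℝ) (j : Fin n) :
    scaleL k t μ j = tw k t j * μ j := rfl

/-- The joint scaling map on `ℝ × (Fin n → ℝ)`, acting on the second factor. -/
noncomputable def SL (k : ℕ) (t : ℝ) : (ℝ × (Fin n → ℝ)) →L[ℝ] (ℝ × (Fin n → ℝ)) :=
  (ContinuousLinearMap.fst ℝ ℝ _).prod ((scaleL k t).comp (ContinuousLinearMap.snd ℝ ℝ _))

lemma SL_apply (k : ℕ) (t : ℝ) (q : ℝ × (Fin n → ℝ)) :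
    SL k t q = (q.1, fun j => tw k t j * q.2 j) := rfl

lemma SL_fst (k : ℕ) (t : ℝ) (q : ℝ × (Fin n → ℝ)) : (SL k t q).1 = q.1 := rfl

lemma continuous_SL (k : ℕ) : Continuous fun t : ℝ => (SL (n := n) k t) := by
  have h : (fun t : ℝ => (SL (n := n) k t)) =
      fun t : ℝ => SL (n := n) k 0 + t • (SL (n := n) k 1 - SL (n := n) k 0) := by
    funext t
    apply ContinuousLinearMap.ext
    intro q
    ext
    · simp [SL_apply]
    · rename_i j
      simp only [SL_apply, ContinuousLinearMap.add_apply, ContinuousLinearMap.smul_apply,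
        ContinuousLinearMap.sub_apply, Prod.snd_add, Prod.smul_snd, Prod.snd_sub,
        Pi.add_apply, Pi.smul_apply, Pi.sub_apply, smul_eq_mul]
      unfold tw
      split <;> ring
  rw [h]
  exact continuous_const.add (continuous_id.smul continuous_const)

lemma norm_scaleL_apply_le (k : ℕ) {t : ℝ} (ht : t ∈ Icc (0:ℝ) 1) (μ : Fin n → ℝ) :
    ‖scaleL k t μ‖ ≤ ‖μ‖ := by
  rw [pi_norm_le_iff_of_nonneg (norm_nonneg _)]
  intro j
  rw [scaleL_apply]
  calc ‖tw k t j * μ j‖ = |tw k t j| * ‖μ j‖ := by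
        rw [Real.norm_eq_abs, Real.norm_eq_abs, abs_mul]
    _ ≤ 1 * ‖μ‖ :=
        mul_le_mul (abs_tw_le k ht j) (norm_le_pi_norm _ j) (norm_nonneg _) zero_le_one
    _ = ‖μ‖ := one_mul _

lemma norm_SL_apply_le (k : ℕ) {t : ℝ} (ht : t ∈ Icc (0:ℝ) 1) (q : ℝ × (Fin n → ℝ)) :
    ‖SL k t q‖ ≤ ‖q‖ := by
  have h2 : (SL k t q).2 = scaleL k t q.2 := rfl
  rw [Prod.norm_def, Prod.norm_def, SL_fst, h2]
  exact max_le (le_max_left _ _) (le_trans (norm_scaleL_apply_le k ht q.2) (le_max_right _ _))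

lemma norm_SL_le (k : ℕ) {t : ℝ} (ht : t ∈ Icc (0:ℝ) 1) :
    ‖SL (n := n) k t‖ ≤ 1 :=
  ContinuousLinearMap.opNorm_le_bound _ zero_le_one fun q => by
    simpa using norm_SL_apply_le k ht q

lemma continuous_SL_apply (k : ℕ) :
    Continuous fun p : ℝ × (ℝ × (Fin n → ℝ)) => SL k p.1 p.2 :=
  ((continuous_SL k).comp continuous_fst).clm_apply continuous_snd

lemma SL_one (k : ℕ) (q : ℝ × (Fin n → ℝ)) : SL k 1 q = q := by
  ext
  · rfl
  · rename_i j
    show tw k 1 j * q.2 j = q.2 j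
    unfold tw; split <;> simp

/-- Stability of product regions `Ioo 0 s₁ ×ˢ ball 0 r` under the scaling maps. -/
lemma SL_mem_region {k : ℕ} {s₁ r : ℝ} {t : ℝ} (ht : t ∈ Icc (0:ℝ) 1)
    {q : ℝ × (Fin n → ℝ)} (hq : q ∈ Ioo 0 s₁ ×ˢ Metric.ball (0 : Fin n → ℝ) r) :
    SL k t q ∈ Ioo 0 s₁ ×ˢ Metric.ball (0 : Fin n → ℝ) r := by
  refine ⟨hq.1, ?_⟩
  rw [mem_ball_zero_iff]
  have h2 : (SL k t q).2 = scaleL k t q.2 := rfl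
  rw [h2]
  exact lt_of_le_of_lt (norm_scaleL_apply_le k ht q.2) (mem_ball_zero_iff.1 hq.2)
/-- The parametric integral operator `q ↦ ∫_{(0,1]} B t (Φ (SL k t q)) dt`. -/
noncomputable def IB (k : ℕ) {F G : Type} [NormedAddCommGroup F] [NormedSpace ℝ F]
    [NormedAddCommGroup G] [NormedSpace ℝ G]
    (B : ℝ → F →L[ℝ] G) (Φ : ℝ × (Fin n → ℝ) → F) (q : ℝ × (Fin n → ℝ)) : G :=
  ∫ t in Ioc (0:ℝ) 1, B t (Φ (SL k t q))

section Machine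

variable {k : ℕ} {U : Set (ℝ × (Fin n → ℝ))}
variable {F G : Type} [NormedAddCommGroup F] [NormedSpace ℝ F]
  [NormedAddCommGroup G] [NormedSpace ℝ G]

/-- Continuity in `t` of the integrand. -/
lemma contOn_integrand (hstab : ∀ t ∈ Icc (0:ℝ) 1, ∀ q ∈ U, SL k t q ∈ U)
    {B : ℝ → F →L[ℝ] G} {Φ : ℝ × (Fin n → ℝ) → F} (hB : Continuous B)
    (hΦ : ContinuousOn Φ U) {q : ℝ × (Fin n → ℝ)} (hq : q ∈ U) :
    ContinuousOn (fun t => B t (Φ (SL k t q))) (Icc (0:ℝ) 1) := by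
  have h1 : ContinuousOn (fun t => Φ (SL k t q)) (Icc (0:ℝ) 1) :=
    hΦ.comp ((continuous_SL k).clm_apply continuous_const).continuousOn
      fun t ht => hstab t ht q hq
  exact isBoundedBilinearMap_apply.continuous.comp_continuousOn (hB.continuousOn.prodMk h1)

lemma integrableOn_integrand (hstab : ∀ t ∈ Icc (0:ℝ) 1, ∀ q ∈ U, SL k t q ∈ U)
    {B : ℝ → F →L[ℝ] G} {Φ : ℝ × (Fin n → ℝ) → F} (hB : Continuous B)
    (hΦ : ContinuousOn Φ U) {q : ℝ × (Fin n → ℝ)} (hq : q ∈ U) :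
    MeasureTheory.IntegrableOn (fun t => B t (Φ (SL k t q))) (Ioc (0:ℝ) 1) volume :=
  ((contOn_integrand hstab hB hΦ hq).integrableOn_Icc).mono_set Ioc_subset_Icc_self

/-- A uniform bound for `‖Ψ (SL k t x)‖` over `t ∈ [0,1]` and `x` near `q`. -/
lemma exists_unif_bound (hU : IsOpen U) (hstab : ∀ t ∈ Icc (0:ℝ) 1, ∀ q ∈ U, SL k t q ∈ U)
    {Ψ : ℝ × (Fin n → ℝ) → F} (hΨ : ContinuousOn Ψ U) {q : ℝ × (Fin n → ℝ)} (hq : q ∈ U) :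
    ∃ ε > 0, Metric.closedBall q ε ⊆ U ∧ ∃ C : ℝ, 0 ≤ C ∧
      ∀ t ∈ Icc (0:ℝ) 1, ∀ x ∈ Metric.closedBall q ε, ‖Ψ (SL k t x)‖ ≤ C := by
  obtain ⟨δ, hδpos, hδ⟩ := Metric.isOpen_iff.1 hU q hq
  refine ⟨δ/2, by positivity, (Metric.closedBall_subset_ball (by linarith)).trans hδ, ?_⟩
  have hsub : Metric.closedBall q (δ/2) ⊆ U :=
    (Metric.closedBall_subset_ball (by linarith)).trans hδ
  set K : Set (ℝ × (Fin n → ℝ)) :=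
    (fun p : ℝ × (ℝ × (Fin n → ℝ)) => SL k p.1 p.2) '' (Icc (0:ℝ) 1 ×ˢ Metric.closedBall q (δ/2))
  have hKcompact : IsCompact K :=
    (isCompact_Icc.prod (isCompact_closedBall q (δ/2))).image (continuous_SL_apply k)
  have hKU : K ⊆ U := by
    rintro - ⟨p, ⟨hp1, hp2⟩, rfl⟩
    exact hstab p.1 hp1 p.2 (hsub hp2)
  obtain ⟨C, hC⟩ := hKcompact.exists_bound_of_continuousOn (hΨ.mono hKU)
  refine ⟨max C 0, le_max_right _ _, fun t ht x hx => ?_⟩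
  exact le_trans (hC _ ⟨(t, x), ⟨ht, hx⟩, rfl⟩) (le_max_left _ _)

variable [CompleteSpace F] [CompleteSpace G]

lemma hasFDerivAt_IB (hU : IsOpen U) (hstab : ∀ t ∈ Icc (0:ℝ) 1, ∀ q ∈ U, SL k t q ∈ U)
    {B : ℝ → F →L[ℝ] G} {Φ : ℝ × (Fin n → ℝ) → F} (hB : Continuous B)
    (hΦ : ContDiffOn ℝ (⊤ : ℕ∞) Φ U) {q : ℝ × (Fin n → ℝ)} (hq : q ∈ U) :
    HasFDerivAt (IB k B Φ)
      (∫ t in Ioc (0:ℝ) 1, (B t).comp ((fderiv ℝ Φ (SL k t q)).comp (SL k t))) q := by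
  have h1top : (1 : WithTop ℕ∞) ≤ ((⊤:ℕ∞) : WithTop ℕ∞) := by exact_mod_cast (le_top : (1:ℕ∞) ≤ ⊤)
  have hΦc : ContinuousOn Φ U := hΦ.continuousOn
  have hΦ' : ContinuousOn (fderiv ℝ Φ) U := hΦ.continuousOn_fderiv_of_isOpen hU h1top
  obtain ⟨ε, hεpos, hεU, C, hC0, hC⟩ := exists_unif_bound hU hstab hΦ' hq
  obtain ⟨CB, hCB⟩ := isCompact_Icc.exists_bound_of_continuousOn (hB.continuousOn (s := Icc (0:ℝ) 1))
  have hCB0 : ∀ t ∈ Icc (0:ℝ) 1, ‖B t‖ ≤ max CB 0 := fun t ht => (hCB t ht).trans (le_max_left _ _)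
  set F' : (ℝ × (Fin n → ℝ)) → ℝ → (ℝ × (Fin n → ℝ)) →L[ℝ] G :=
    fun x t => (B t).comp ((fderiv ℝ Φ (SL k t x)).comp (SL k t)) with hF'
  have key : ∀ t ∈ Icc (0:ℝ) 1, ∀ x ∈ Metric.ball q ε, ‖F' x t‖ ≤ max CB 0 * C := by
    intro t ht x hx
    have h1 : ‖(fderiv ℝ Φ (SL k t x)).comp (SL k t)‖ ≤ C * 1 := by
      refine (ContinuousLinearMap.opNorm_comp_le _ _).trans ?_
      exact mul_le_mul (hC t ht x (Metric.ball_subset_closedBall hx)) (norm_SL_le k ht)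
        (norm_nonneg _) hC0
    refine (ContinuousLinearMap.opNorm_comp_le _ _).trans ?_
    rw [mul_one] at h1
    exact mul_le_mul (hCB0 t ht) h1 (norm_nonneg _) (le_max_right _ _)
  have hdiff : ∀ t ∈ Ioc (0:ℝ) 1, ∀ x ∈ Metric.ball q ε,
      HasFDerivAt (fun y => B t (Φ (SL k t y))) (F' x t) x := by
    intro t ht x hx
    have hxU : SL k t x ∈ U :=
      hstab t (Ioc_subset_Icc_self ht) x (hεU (Metric.ball_subset_closedBall hx))
    have hΦd : HasFDerivAt Φ (fderiv ℝ Φ (SL k t x)) (SL k t x) :=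
      ((hΦ.differentiableOn (by simp)).differentiableAt (hU.mem_nhds hxU)).hasFDerivAt
    exact (B t).hasFDerivAt.comp x (hΦd.comp x (SL k t).hasFDerivAt)
  refine hasFDerivAt_integral_of_dominated_of_fderiv_le (𝕜 := ℝ)
    (μ := volume.restrict (Ioc (0:ℝ) 1)) (F := fun x t => B t (Φ (SL k t x))) (F' := F')
    (x₀ := q) (bound := fun _ => max CB 0 * C) (Metric.ball_mem_nhds q hεpos) ?_ ?_ ?_ ?_ ?_ ?_
  · filter_upwards [Metric.ball_mem_nhds q hεpos] with x hx
    have hxU : x ∈ U := hεU (Metric.ball_subset_closedBall hx)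
    exact ((contOn_integrand hstab hB hΦc hxU).mono
      Ioc_subset_Icc_self).aestronglyMeasurable measurableSet_Ioc
  · exact integrableOn_integrand hstab hB hΦc hq
  · refine (ContinuousOn.mono ?_ Ioc_subset_Icc_self).aestronglyMeasurable measurableSet_Ioc
    refine ContinuousOn.clm_comp hB.continuousOn (ContinuousOn.clm_comp ?_ (continuous_SL k).continuousOn)
    exact hΦ'.comp ((continuous_SL k).clm_apply continuous_const).continuousOn
      fun t ht => hstab t ht q hq
  · refine (MeasureTheory.ae_restrict_iff' measurableSet_Ioc).2 (Eventually.of_forall ?_)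
    exact fun t ht x hx => key t (Ioc_subset_Icc_self ht) x hx
  · exact MeasureTheory.integrableOn_const (by simp [Real.volume_Ioc])
  · refine (MeasureTheory.ae_restrict_iff' measurableSet_Ioc).2 (Eventually.of_forall ?_)
    exact fun t ht x hx => hdiff t ht x hx

end Machine
section Machine2

variable {k : ℕ} {U : Set (ℝ × (Fin n → ℝ))}
variable {F G : Type} [NormedAddCommGroup F] [NormedSpace ℝ F]
  [NormedAddCommGroup G] [NormedSpace ℝ G] [CompleteSpace F] [CompleteSpace G]

lemma continuousOn_IB (hU : IsOpen U) (hstab : ∀ t ∈ Icc (0:ℝ) 1, ∀ q ∈ U, SL k t q ∈ U)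
    {B : ℝ → F →L[ℝ] G} {Φ : ℝ × (Fin n → ℝ) → F} (hB : Continuous B)
    (hΦ : ContinuousOn Φ U) : ContinuousOn (IB k B Φ) U := by
  intro q hq
  obtain ⟨ε, hεpos, hεU, C, hC0, hC⟩ := exists_unif_bound hU hstab hΦ hq
  obtain ⟨CB, hCB⟩ := isCompact_Icc.exists_bound_of_continuousOn (hB.continuousOn (s := Icc (0:ℝ) 1))
  refine (MeasureTheory.continuousAt_of_dominated (bound := fun _ => max CB 0 * C) ?_ ?_ ?_ ?_).continuousWithinAt
  · filter_upwards [Metric.ball_mem_nhds q hεpos] with x hx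
    have hxU : x ∈ U := hεU (Metric.ball_subset_closedBall hx)
    exact ((contOn_integrand hstab hB hΦ hxU).mono
      Ioc_subset_Icc_self).aestronglyMeasurable measurableSet_Ioc
  · filter_upwards [Metric.ball_mem_nhds q hεpos] with x hx
    refine (MeasureTheory.ae_restrict_iff' measurableSet_Ioc).2 (Eventually.of_forall fun t ht => ?_)
    calc ‖B t (Φ (SL k t x))‖ ≤ ‖B t‖ * ‖Φ (SL k t x)‖ := (B t).le_opNorm _
      _ ≤ max CB 0 * C := by
          refine mul_le_mul ((hCB t (Ioc_subset_Icc_self ht)).trans (le_max_left _ _))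
            (hC t (Ioc_subset_Icc_self ht) x (Metric.ball_subset_closedBall hx))
            (norm_nonneg _) (le_max_right _ _)
  · exact MeasureTheory.integrableOn_const (by simp [Real.volume_Ioc])
  · refine (MeasureTheory.ae_restrict_iff' measurableSet_Ioc).2 (Eventually.of_forall fun t ht => ?_)
    have hxU : SL k t q ∈ U := hstab t (Ioc_subset_Icc_self ht) q hq
    exact ((B t).continuous.continuousAt).comp
      ((hΦ.continuousAt (hU.mem_nhds hxU)).comp (SL k t).continuous.continuousAt)

lemma contDiffOn_IB_nat (hU : IsOpen U) (hstab : ∀ t ∈ Icc (0:ℝ) 1, ∀ q ∈ U, SL k t q ∈ U)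
    (m : ℕ) :
    ∀ {F G : Type} [NormedAddCommGroup F] [NormedSpace ℝ F] [CompleteSpace F]
      [NormedAddCommGroup G] [NormedSpace ℝ G] [CompleteSpace G]
      {B : ℝ → F →L[ℝ] G} {Φ : ℝ × (Fin n → ℝ) → F},
      Continuous B → ContDiffOn ℝ (⊤ : ℕ∞) Φ U → ContDiffOn ℝ (m : ℕ) (IB k B Φ) U := by
  induction m with
  | zero =>
    intro F G _ _ _ _ _ _ B Φ hB hΦ
    exact contDiffOn_zero.2 (continuousOn_IB hU hstab hB hΦ.continuousOn)
  | succ m ih =>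
    intro F G _ _ _ _ _ _ B Φ hB hΦ
    have htop1 : ((⊤:ℕ∞) : WithTop ℕ∞) + 1 ≤ ((⊤:ℕ∞) : WithTop ℕ∞) := le_of_eq (by rfl)
    have hΦ' : ContDiffOn ℝ (⊤ : ℕ∞) (fderiv ℝ Φ) U := hΦ.fderiv_of_isOpen hU htop1
    set B' : ℝ → ((ℝ × (Fin n → ℝ)) →L[ℝ] F) →L[ℝ] ((ℝ × (Fin n → ℝ)) →L[ℝ] G) :=
      fun t => (ContinuousLinearMap.compL ℝ (ℝ × (Fin n → ℝ)) F G (B t)).comp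
        ((ContinuousLinearMap.compL ℝ (ℝ × (Fin n → ℝ)) (ℝ × (Fin n → ℝ)) F).flip (SL k t))
      with hB'def
    have hB' : Continuous B' := by
      apply Continuous.clm_comp
      · exact (ContinuousLinearMap.compL ℝ (ℝ × (Fin n → ℝ)) F G).continuous.comp hB
      · exact ((ContinuousLinearMap.compL ℝ (ℝ × (Fin n → ℝ)) (ℝ × (Fin n → ℝ)) F).flip).continuous.comp
          (continuous_SL k)
    have heq : EqOn (fderiv ℝ (IB k B Φ)) (IB k B' (fderiv ℝ Φ)) U := fun q hq => by
      rw [(hasFDerivAt_IB hU hstab hB hΦ hq).fderiv]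
      rfl
    have hcast : ((m + 1 : ℕ) : WithTop ℕ∞) = (m : ℕ) + 1 := by push_cast; rfl
    rw [hcast, contDiffOn_succ_iff_fderiv_of_isOpen hU]
    refine ⟨fun q hq => (hasFDerivAt_IB hU hstab hB hΦ hq).differentiableAt.differentiableWithinAt,
      ?_, (ih hB' hΦ').congr heq⟩
    simp
end Machine2
section Machine3

variable {k : ℕ} {U : Set (ℝ × (Fin n → ℝ))}
variable {F G : Type} [NormedAddCommGroup F] [NormedSpace ℝ F]
  [NormedAddCommGroup G] [NormedSpace ℝ G] [CompleteSpace F] [CompleteSpace G]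

lemma contDiffOn_IB_top (hU : IsOpen U) (hstab : ∀ t ∈ Icc (0:ℝ) 1, ∀ q ∈ U, SL k t q ∈ U)
    {B : ℝ → F →L[ℝ] G} {Φ : ℝ × (Fin n → ℝ) → F} (hB : Continuous B)
    (hΦ : ContDiffOn ℝ (⊤ : ℕ∞) Φ U) : ContDiffOn ℝ (⊤ : ℕ∞) (IB k B Φ) U :=
  contDiffOn_infty.2 fun m => contDiffOn_IB_nat hU hstab m hB hΦ

end Machine3

/-- Directional derivative operator. -/
noncomputable def Dv (v : ℝ × (Fin n → ℝ)) (Φ : ℝ × (Fin n → ℝ) → ℝ) :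
    ℝ × (Fin n → ℝ) → ℝ := fun q => fderiv ℝ Φ q v

/-- Iterated directional derivatives along a list of directions (head outermost). -/
noncomputable def DL (Lv : List (ℝ × (Fin n → ℝ))) (Φ : ℝ × (Fin n → ℝ) → ℝ) :
    ℝ × (Fin n → ℝ) → ℝ := Lv.foldr Dv Φ

@[simp] lemma DL_nil (Φ : ℝ × (Fin n → ℝ) → ℝ) : DL [] Φ = Φ := rfl

@[simp] lemma DL_cons (v : ℝ × (Fin n → ℝ)) (Lv : List (ℝ × (Fin n → ℝ)))
    (Φ : ℝ × (Fin n → ℝ) → ℝ) : DL (v :: Lv) Φ = Dv v (DL Lv Φ) := rfl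

lemma DL_append (L₁ L₂ : List (ℝ × (Fin n → ℝ))) (Φ : ℝ × (Fin n → ℝ) → ℝ) :
    DL (L₁ ++ L₂) Φ = DL L₁ (DL L₂ Φ) := List.foldr_append

section DvCalc

variable {W : Set (ℝ × (Fin n → ℝ))} {Φ Ψ : ℝ × (Fin n → ℝ) → ℝ}

lemma htop1' : ((⊤:ℕ∞) : WithTop ℕ∞) + 1 ≤ ((⊤:ℕ∞) : WithTop ℕ∞) := le_of_eq (by rfl)

lemma h1top' : (1 : WithTop ℕ∞) ≤ ((⊤:ℕ∞) : WithTop ℕ∞) := by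
  exact_mod_cast (le_top : (1:ℕ∞) ≤ ⊤)

lemma dv_smooth (hW : IsOpen W) (hΦ : ContDiffOn ℝ (⊤ : ℕ∞) Φ W) (v : ℝ × (Fin n → ℝ)) :
    ContDiffOn ℝ (⊤ : ℕ∞) (Dv v Φ) W := by
  have h := hΦ.fderiv_of_isOpen hW htop1'
  exact (ContinuousLinearMap.apply ℝ ℝ v).contDiff.comp_contDiffOn h

lemma dv_congr (hW : IsOpen W) (h : EqOn Φ Ψ W) (v : ℝ × (Fin n → ℝ)) :
    EqOn (Dv v Φ) (Dv v Ψ) W := fun q hq => by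
  have he : Φ =ᶠ[𝓝 q] Ψ := eventually_of_mem (hW.mem_nhds hq) h
  simp only [Dv]
  rw [he.fderiv_eq]

lemma hasFDerivAt_of_smooth (hW : IsOpen W) (hΦ : ContDiffOn ℝ (⊤ : ℕ∞) Φ W)
    {q : ℝ × (Fin n → ℝ)} (hq : q ∈ W) : HasFDerivAt Φ (fderiv ℝ Φ q) q :=
  ((hΦ.differentiableOn (by simp)).differentiableAt (hW.mem_nhds hq)).hasFDerivAt

lemma dv_comm (hW : IsOpen W) (hΦ : ContDiffOn ℝ (⊤ : ℕ∞) Φ W)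
    {q : ℝ × (Fin n → ℝ)} (hq : q ∈ W) (u w : ℝ × (Fin n → ℝ)) :
    Dv u (Dv w Φ) q = Dv w (Dv u Φ) q := by
  have h2 : ContDiffAt ℝ 2 Φ q := (hΦ.contDiffAt (hW.mem_nhds hq)).of_le
    (by norm_cast)
  have hsym := h2.isSymmSndFDerivAt (by simp)
  have hdiff : DifferentiableAt ℝ (fderiv ℝ Φ) q :=
    ((hΦ.fderiv_of_isOpen hW htop1').differentiableOn (by simp)).differentiableAt (hW.mem_nhds hq)
  have key : ∀ u w : ℝ × (Fin n → ℝ), Dv u (Dv w Φ) q = fderiv ℝ (fderiv ℝ Φ) q u w := by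
    intro u w
    have h1 : HasFDerivAt (Dv w Φ)
        ((ContinuousLinearMap.apply ℝ ℝ w).comp (fderiv ℝ (fderiv ℝ Φ) q)) q :=
      (ContinuousLinearMap.apply ℝ ℝ w).hasFDerivAt.comp q hdiff.hasFDerivAt
    show fderiv ℝ (Dv w Φ) q u = _
    rw [h1.fderiv]
    rfl
  rw [key, key]
  exact hsym u w

lemma DL_smooth (hW : IsOpen W) (hΦ : ContDiffOn ℝ (⊤ : ℕ∞) Φ W) :
    ∀ Lv : List (ℝ × (Fin n → ℝ)), ContDiffOn ℝ (⊤ : ℕ∞) (DL Lv Φ) W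
  | [] => hΦ
  | v :: Lv => dv_smooth hW (DL_smooth hW hΦ Lv) v

lemma DL_congr (hW : IsOpen W) (h : EqOn Φ Ψ W) :
    ∀ Lv : List (ℝ × (Fin n → ℝ)), EqOn (DL Lv Φ) (DL Lv Ψ) W
  | [] => h
  | v :: Lv => dv_congr hW (DL_congr hW h Lv) v

lemma DL_perm (hW : IsOpen W) (hΦ : ContDiffOn ℝ (⊤ : ℕ∞) Φ W)
    {L₁ L₂ : List (ℝ × (Fin n → ℝ))} (hp : L₁.Perm L₂) :
    EqOn (DL L₁ Φ) (DL L₂ Φ) W := by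
  induction hp with
  | nil => exact fun q hq => rfl
  | cons x h ih => exact dv_congr hW ih x
  | swap x y l => exact fun q hq => dv_comm hW (DL_smooth hW hΦ l) hq y x
  | trans h₁ h₂ ih₁ ih₂ => exact fun q hq => (ih₁ hq).trans (ih₂ hq)

end DvCalc
/-- Uncurry. -/
def uncur (ψ : ℝ → (Fin n → ℝ) → ℝ) : ℝ × (Fin n → ℝ) → ℝ := fun q => ψ q.1 q.2

section Corr

variable {W : Set (ℝ × (Fin n → ℝ))} {ψ : ℝ → (Fin n → ℝ) → ℝ} {Φ : ℝ × (Fin n → ℝ) → ℝ}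

lemma corrS (hW : IsOpen W) (h : EqOn (uncur ψ) Φ W) (hΦ : ContDiffOn ℝ (⊤ : ℕ∞) Φ W)
    {q : ℝ × (Fin n → ℝ)} (hq : q ∈ W) :
    uncur (pderivS ψ) q = Dv ((1:ℝ), (0 : Fin n → ℝ)) Φ q := by
  obtain ⟨s, μ⟩ := q
  have hc : Continuous (fun t : ℝ => ((t : ℝ), μ)) := continuous_id.prodMk continuous_const
  have hev : (fun t => ψ t μ) =ᶠ[𝓝 s] (fun t => Φ (t, μ)) := by
    filter_upwards [(hW.preimage hc).mem_nhds (show s ∈ _ from hq)] with t ht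
    exact h ht
  have hd : HasDerivAt (fun t => Φ (t, μ)) (fderiv ℝ Φ (s, μ) (1, 0)) s := by
    have hcurve : HasDerivAt (fun t : ℝ => ((t:ℝ), μ)) ((1:ℝ), (0 : Fin n → ℝ)) s :=
      (hasDerivAt_id s).prodMk (hasDerivAt_const s μ)
    exact (hasFDerivAt_of_smooth hW hΦ hq).comp_hasDerivAt s hcurve
  show deriv (fun t => ψ t μ) s = _
  rw [hev.deriv_eq]
  exact hd.deriv

lemma corrMu (hW : IsOpen W) (h : EqOn (uncur ψ) Φ W) (hΦ : ContDiffOn ℝ (⊤ : ℕ∞) Φ W)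
    (j : Fin n) {q : ℝ × (Fin n → ℝ)} (hq : q ∈ W) :
    uncur (pderivMu j ψ) q = Dv ((0:ℝ), Pi.single j (1:ℝ)) Φ q := by
  obtain ⟨s, μ⟩ := q
  have hupd : Continuous (fun t : ℝ => Function.update μ j t) := by
    apply continuous_pi; intro i
    have hi : (fun t : ℝ => Function.update μ j t i) = fun t => if i = j then t else μ i :=
      funext fun t => Function.update_apply μ j t i
    rw [hi]
    split_ifs
    exacts [continuous_id, continuous_const]
  have hc : Continuous (fun t : ℝ => (s, Function.update μ j t)) := continuous_const.prodMk hupd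
  have hq' : s ∈ (fun t : ℝ => (s, Function.update μ j t)) ⁻¹' W → True := fun _ => trivial
  have hmem : μ j ∈ (fun t : ℝ => (s, Function.update μ j t)) ⁻¹' W := by
    show (s, Function.update μ j (μ j)) ∈ W
    rw [Function.update_eq_self]
    exact hq
  have hev : (fun t => ψ s (Function.update μ j t)) =ᶠ[𝓝 (μ j)]
      (fun t => Φ (s, Function.update μ j t)) := by
    filter_upwards [(hW.preimage hc).mem_nhds hmem] with t ht
    exact h ht
  have hcurve : HasDerivAt (fun t : ℝ => (s, Function.update μ j t))
      ((0:ℝ), Pi.single j (1:ℝ)) (μ j) := by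
    refine (hasDerivAt_const (μ j) s).prodMk ?_
    rw [hasDerivAt_pi]
    intro i
    have hi : (fun t : ℝ => Function.update μ j t i) = fun t => if i = j then t else μ i :=
      funext fun t => Function.update_apply μ j t i
    rw [hi]
    rcases eq_or_ne i j with hij | hij
    · subst hij
      simpa [Pi.single_apply] using hasDerivAt_id' (μ i)
    · simp only [if_neg hij]
      simpa [Pi.single_apply, hij] using hasDerivAt_const (μ j) (μ i)
  have hΦd : HasFDerivAt Φ (fderiv ℝ Φ (s, μ)) (s, Function.update μ j (μ j)) := by
    rw [Function.update_eq_self]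
    exact hasFDerivAt_of_smooth hW hΦ hq
  have hd : HasDerivAt (fun t => Φ (s, Function.update μ j t))
      (fderiv ℝ Φ (s, μ) ((0:ℝ), Pi.single j (1:ℝ))) (μ j) :=
    hΦd.comp_hasDerivAt (μ j) hcurve
  show deriv (fun t => ψ s (Function.update μ j t)) (μ j) = _
  rw [hev.deriv_eq]
  exact hd.deriv

lemma corr_foldMu (hW : IsOpen W) :
    ∀ (js : List (Fin n)) {ψ : ℝ → (Fin n → ℝ) → ℝ} {Φ : ℝ × (Fin n → ℝ) → ℝ},
      EqOn (uncur ψ) Φ W → ContDiffOn ℝ (⊤ : ℕ∞) Φ W →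
      EqOn (uncur (js.foldr pderivMu ψ))
        (DL (js.map fun j => ((0:ℝ), Pi.single j (1:ℝ))) Φ) W
  | [], ψ, Φ, h, _ => h
  | j :: js, ψ, Φ, h, hΦ => fun q hq => by
    have ih := corr_foldMu hW js h hΦ
    have hsm : ContDiffOn ℝ (⊤ : ℕ∞) (DL (js.map fun j => ((0:ℝ), Pi.single j (1:ℝ))) Φ) W :=
      DL_smooth hW hΦ _
    exact corrMu hW ih hsm j hq

lemma corr_iterS (hW : IsOpen W) :
    ∀ (l₀ : ℕ) {ψ : ℝ → (Fin n → ℝ) → ℝ} {Φ : ℝ × (Fin n → ℝ) → ℝ},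
      EqOn (uncur ψ) Φ W → ContDiffOn ℝ (⊤ : ℕ∞) Φ W →
      EqOn (uncur (pderivS^[l₀] ψ))
        (DL (List.replicate l₀ ((1:ℝ), (0 : Fin n → ℝ))) Φ) W
  | 0, ψ, Φ, h, _ => h
  | (l₀+1), ψ, Φ, h, hΦ => fun q hq => by
    have ih := corr_iterS hW l₀ h hΦ
    have hsm := DL_smooth hW hΦ (List.replicate l₀ ((1:ℝ), (0 : Fin n → ℝ)))
    have h1 : uncur (pderivS^[l₀+1] ψ) q = uncur (pderivS (pderivS^[l₀] ψ)) q := by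
      rw [Function.iterate_succ_apply']
    rw [h1, List.replicate_succ]
    exact corrS hW ih hsm hq

end Corr
section Lists

/-- The flattened list of μ-indices for a multi-index `l`. -/
def muflat (l : Fin n → ℕ) : List (Fin n) := (List.ofFn fun j => List.replicate (l j) j).flatten

lemma foldr_replicate (j : Fin n) (m : ℕ) (ψ : ℝ → (Fin n → ℝ) → ℝ) :
    (List.replicate m j).foldr pderivMu ψ = (pderivMu j)^[m] ψ := by
  induction m with
  | zero => rfl
  | succ m ih =>
    rw [List.replicate_succ, List.foldr_cons, ih]
    exact (Function.iterate_succ_apply' (pderivMu j) m ψ).symm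

lemma foldr_ofFn_aux (l : Fin n → ℕ) : ∀ (L : List (Fin n)) (ψ : ℝ → (Fin n → ℝ) → ℝ),
    ((L.map fun j => (pderivMu j)^[l j]).foldr (· ∘ ·) id) ψ
      = ((L.map fun j => List.replicate (l j) j).flatten).foldr pderivMu ψ
  | [], ψ => rfl
  | j :: L, ψ => by
    simp only [List.map_cons, List.foldr_cons, List.flatten_cons, List.foldr_append,
      foldr_replicate, Function.comp_apply]
    exact congrArg ((pderivMu j)^[l j]) (foldr_ofFn_aux l L ψ)

lemma pderivMulti_eq_foldr (l₀ : ℕ) (l : Fin n → ℕ) (ψ : ℝ → (Fin n → ℝ) → ℝ) :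
    pderivMulti l₀ l ψ = pderivS^[l₀] ((muflat l).foldr pderivMu ψ) := by
  unfold pderivMulti muflat
  congr 1
  rw [List.ofFn_eq_map, List.ofFn_eq_map]
  exact foldr_ofFn_aux l (List.finRange n) ψ

/-- The canonical direction list for `pderivMulti l₀ l`. -/
noncomputable def canL (l₀ : ℕ) (l : Fin n → ℕ) : List (ℝ × (Fin n → ℝ)) :=
  List.replicate l₀ ((1:ℝ), (0 : Fin n → ℝ)) ++
    (muflat l).map fun j => ((0:ℝ), Pi.single j (1:ℝ))

lemma corr_multi {W : Set (ℝ × (Fin n → ℝ))} (hW : IsOpen W) {f : ℝ → (Fin n → ℝ) → ℝ}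
    (hΦf : ContDiffOn ℝ (⊤ : ℕ∞) (uncur f) W) (l₀ : ℕ) (l : Fin n → ℕ) :
    EqOn (uncur (pderivMulti l₀ l f)) (DL (canL l₀ l) (uncur f)) W := by
  intro q hq
  rw [pderivMulti_eq_foldr]
  have h1 := corr_foldMu hW (muflat l) (fun _ _ => rfl) hΦf
  have h2 := corr_iterS hW l₀ h1 (DL_smooth hW hΦf _)
  rw [canL, DL_append]
  exact h2 hq

lemma count_muflat (l : Fin n → ℕ) (j : Fin n) : (muflat l).count j = l j := by
  unfold muflat
  rw [List.count_flatten, List.map_ofFn, List.sum_ofFn]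
  simp only [Function.comp_apply, List.count_replicate]
  simp [Finset.sum_ite_eq' Finset.univ j l]

lemma muflat_perm (l : Fin n → ℕ) (i : Fin n) :
    (muflat (Function.update l i (l i + 1))).Perm (muflat l ++ [i]) := by
  classical
  rw [List.perm_iff_count]
  intro j
  rw [count_muflat, List.count_append, count_muflat]
  rcases eq_or_ne j i with h | h
  · subst h
    simp [Function.update_self]
  · have h' : ¬ (i = j) := fun hh => h hh.symm
    simp [Function.update_apply, h, h', List.count_cons]

lemma canL_perm (l₀ : ℕ) (l : Fin n → ℕ) (i : Fin n) :
    (canL l₀ l ++ [((0:ℝ), Pi.single i (1:ℝ))]).Perm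
      (canL l₀ (Function.update l i (l i + 1))) := by
  unfold canL
  rw [List.append_assoc]
  apply List.Perm.append_left
  have h : ((muflat l).map fun j => ((0:ℝ), Pi.single j (1:ℝ))) ++ [((0:ℝ), Pi.single i (1:ℝ))]
      = (muflat l ++ [i]).map fun j => ((0:ℝ), Pi.single j (1:ℝ)) := by
    rw [List.map_append]; rfl
  rw [h]
  exact (muflat_perm l i).symm.map _

end Lists
section JCalc
open MeasureTheory

variable {k : ℕ} {U : Set (ℝ × (Fin n → ℝ))}

/-- Scalar multiplication as a family of CLMs. -/
noncomputable def Bc (c : ℝ → ℝ) : ℝ → (ℝ →L[ℝ] ℝ) := fun t => c t • (1 : ℝ →L[ℝ] ℝ)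

lemma Bc_cont {c : ℝ → ℝ} (hc : Continuous c) : Continuous (Bc c) :=
  hc.smul continuous_const

/-- Weighted parametric integral of a scalar function. -/
noncomputable def Jc (k : ℕ) (c : ℝ → ℝ) (Ψ : ℝ × (Fin n → ℝ) → ℝ) :
    ℝ × (Fin n → ℝ) → ℝ := IB k (Bc c) Ψ

lemma Jc_apply (k : ℕ) (c : ℝ → ℝ) (Ψ : ℝ × (Fin n → ℝ) → ℝ) (q : ℝ × (Fin n → ℝ)) :
    Jc k c Ψ q = ∫ t in Ioc (0:ℝ) 1, c t * Ψ (SL k t q) := by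
  unfold Jc IB Bc
  simp [smul_eq_mul]

lemma Jc_smooth (hU : IsOpen U) (hstab : ∀ t ∈ Icc (0:ℝ) 1, ∀ q ∈ U, SL k t q ∈ U)
    {c : ℝ → ℝ} {Ψ : ℝ × (Fin n → ℝ) → ℝ} (hc : Continuous c)
    (hΨ : ContDiffOn ℝ (⊤ : ℕ∞) Ψ U) : ContDiffOn ℝ (⊤ : ℕ∞) (Jc k c Ψ) U :=
  contDiffOn_IB_top hU hstab (Bc_cont hc) hΨ

lemma dv_Jc (hU : IsOpen U) (hstab : ∀ t ∈ Icc (0:ℝ) 1, ∀ q ∈ U, SL k t q ∈ U)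
    {c : ℝ → ℝ} {Ψ : ℝ × (Fin n → ℝ) → ℝ} (hc : Continuous c)
    (hΨ : ContDiffOn ℝ (⊤ : ℕ∞) Ψ U) {q : ℝ × (Fin n → ℝ)} (hq : q ∈ U)
    (v : ℝ × (Fin n → ℝ)) :
    Dv v (Jc k c Ψ) q = ∫ t in Ioc (0:ℝ) 1, c t * (fderiv ℝ Ψ (SL k t q) (SL k t v)) := by
  have hF := hasFDerivAt_IB hU hstab (Bc_cont hc) hΨ hq
  have hcont : ContinuousOn
      (fun t => (Bc c t).comp ((fderiv ℝ Ψ (SL k t q)).comp (SL k t))) (Icc (0:ℝ) 1) := by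
    refine ContinuousOn.clm_comp (Bc_cont hc).continuousOn
      (ContinuousOn.clm_comp ?_ (continuous_SL k).continuousOn)
    exact (hΨ.continuousOn_fderiv_of_isOpen hU h1top').comp
      ((continuous_SL k).clm_apply continuous_const).continuousOn fun t ht => hstab t ht q hq
  have hint : IntegrableOn
      (fun t => (Bc c t).comp ((fderiv ℝ Ψ (SL k t q)).comp (SL k t))) (Ioc (0:ℝ) 1) volume :=
    hcont.integrableOn_Icc.mono_set Ioc_subset_Icc_self
  show fderiv ℝ (IB k (Bc c) Ψ) q v = _
  rw [hF.fderiv, ContinuousLinearMap.integral_apply hint v]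
  refine setIntegral_congr_fun measurableSet_Ioc fun t _ => ?_
  simp [Bc, smul_eq_mul]

lemma SL_v_S (k : ℕ) (t : ℝ) : SL (n := n) k t ((1:ℝ), (0 : Fin n → ℝ)) = ((1:ℝ), (0 : Fin n → ℝ)) := by
  ext
  · rfl
  · rename_i j
    show tw k t j * 0 = 0
    exact mul_zero _

lemma SL_v_mu (k : ℕ) (t : ℝ) (j : Fin n) :
    SL k t ((0:ℝ), Pi.single j (1:ℝ)) = ((0:ℝ), tw k t j • (Pi.single j (1:ℝ) : Fin n → ℝ)) := by
  ext
  · rfl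
  · rename_i i
    show tw k t i * (Pi.single j (1:ℝ) : Fin n → ℝ) i = tw k t j * (Pi.single j (1:ℝ) : Fin n → ℝ) i
    rcases eq_or_ne i j with h | h
    · subst h; rfl
    · simp [Pi.single_apply, h]

lemma pair_zero_smul (a : ℝ) (x : Fin n → ℝ) :
    (((0:ℝ), a • x) : ℝ × (Fin n → ℝ)) = a • (((0:ℝ), x) : ℝ × (Fin n → ℝ)) := by
  rw [Prod.smul_mk, smul_zero]

lemma dv_Jc_S (hU : IsOpen U) (hstab : ∀ t ∈ Icc (0:ℝ) 1, ∀ q ∈ U, SL k t q ∈ U)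
    {c : ℝ → ℝ} {Ψ : ℝ × (Fin n → ℝ) → ℝ} (hc : Continuous c)
    (hΨ : ContDiffOn ℝ (⊤ : ℕ∞) Ψ U) {q : ℝ × (Fin n → ℝ)} (hq : q ∈ U) :
    Dv ((1:ℝ), (0 : Fin n → ℝ)) (Jc k c Ψ) q
      = Jc k c (Dv ((1:ℝ), (0 : Fin n → ℝ)) Ψ) q := by
  rw [dv_Jc hU hstab hc hΨ hq, Jc_apply]
  refine setIntegral_congr_fun measurableSet_Ioc fun t _ => ?_
  rw [SL_v_S]
  rfl

lemma dv_Jc_mu (hU : IsOpen U) (hstab : ∀ t ∈ Icc (0:ℝ) 1, ∀ q ∈ U, SL k t q ∈ U)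
    {c : ℝ → ℝ} {Ψ : ℝ × (Fin n → ℝ) → ℝ} (hc : Continuous c)
    (hΨ : ContDiffOn ℝ (⊤ : ℕ∞) Ψ U) {q : ℝ × (Fin n → ℝ)} (hq : q ∈ U) (j : Fin n) :
    Dv ((0:ℝ), Pi.single j (1:ℝ)) (Jc k c Ψ) q
      = Jc k (fun t => c t * tw k t j) (Dv ((0:ℝ), Pi.single j (1:ℝ)) Ψ) q := by
  rw [dv_Jc hU hstab hc hΨ hq, Jc_apply]
  refine setIntegral_congr_fun measurableSet_Ioc fun t _ => ?_
  rw [SL_v_mu, pair_zero_smul, ContinuousLinearMap.map_smul]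
  show c t * (tw k t j * fderiv ℝ Ψ (SL k t q) ((0:ℝ), Pi.single j (1:ℝ)))
    = (c t * tw k t j) * Dv ((0:ℝ), Pi.single j (1:ℝ)) Ψ (SL k t q)
  rw [mul_assoc]
  rfl

lemma J_foldMu (hU : IsOpen U) (hstab : ∀ t ∈ Icc (0:ℝ) 1, ∀ q ∈ U, SL k t q ∈ U) :
    ∀ (js : List (Fin n)) {ψ : ℝ → (Fin n → ℝ) → ℝ} {c : ℝ → ℝ} {Ψ : ℝ × (Fin n → ℝ) → ℝ},
      EqOn (uncur ψ) (Jc k c Ψ) U → Continuous c → ContDiffOn ℝ (⊤ : ℕ∞) Ψ U →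
      ∃ c' : ℝ → ℝ, Continuous c' ∧ (∀ t ∈ Ioc (0:ℝ) 1, |c' t| ≤ |c t|) ∧
        EqOn (uncur (js.foldr pderivMu ψ))
          (Jc k c' (DL (js.map fun j => ((0:ℝ), Pi.single j (1:ℝ))) Ψ)) U
  | [], ψ, c, Ψ, h, hc, _ => ⟨c, hc, fun _ _ => le_rfl, h⟩
  | j :: js, ψ, c, Ψ, h, hc, hΨ => by
    obtain ⟨c₁, hc₁, hb₁, heq₁⟩ := J_foldMu hU hstab js h hc hΨ
    have hΨ₁ : ContDiffOn ℝ (⊤ : ℕ∞)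
        (DL (js.map fun j => ((0:ℝ), Pi.single j (1:ℝ))) Ψ) U := DL_smooth hU hΨ _
    have hJsm : ContDiffOn ℝ (⊤ : ℕ∞)
        (Jc k c₁ (DL (js.map fun j => ((0:ℝ), Pi.single j (1:ℝ))) Ψ)) U :=
      Jc_smooth hU hstab hc₁ hΨ₁
    refine ⟨fun t => c₁ t * tw k t j, hc₁.mul (continuous_tw k j), ?_, ?_⟩
    · intro t ht
      rw [abs_mul]
      calc |c₁ t| * |tw k t j| ≤ |c t| * 1 :=
            mul_le_mul (hb₁ t ht) (abs_tw_le k ⟨le_of_lt ht.1, ht.2⟩ j) (abs_nonneg _)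
              (abs_nonneg _)
        _ = |c t| := mul_one _
    · intro q hq
      exact (corrMu hU heq₁ hJsm j hq).trans (dv_Jc_mu hU hstab hc₁ hΨ₁ hq j)

lemma J_iterS (hU : IsOpen U) (hstab : ∀ t ∈ Icc (0:ℝ) 1, ∀ q ∈ U, SL k t q ∈ U) :
    ∀ (l₀ : ℕ) {ψ : ℝ → (Fin n → ℝ) → ℝ} {c : ℝ → ℝ} {Ψ : ℝ × (Fin n → ℝ) → ℝ},
      EqOn (uncur ψ) (Jc k c Ψ) U → Continuous c → ContDiffOn ℝ (⊤ : ℕ∞) Ψ U →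
      EqOn (uncur (pderivS^[l₀] ψ))
        (Jc k c (DL (List.replicate l₀ ((1:ℝ), (0 : Fin n → ℝ))) Ψ)) U
  | 0, ψ, c, Ψ, h, _, _ => h
  | (l₀+1), ψ, c, Ψ, h, hc, hΨ => fun q hq => by
    have ih := J_iterS hU hstab l₀ h hc hΨ
    have hsm := DL_smooth hU hΨ (List.replicate l₀ ((1:ℝ), (0 : Fin n → ℝ)))
    have hJsm := Jc_smooth hU hstab hc hsm
    have h1 : uncur (pderivS^[l₀+1] ψ) q = uncur (pderivS (pderivS^[l₀] ψ)) q := by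
      rw [Function.iterate_succ_apply']
    rw [h1, List.replicate_succ]
    exact (corrS hU ih hJsm hq).trans (dv_Jc_S hU hstab hc hsm hq)

end JCalc
end Aux

open MeasureTheory

theorem stmt_5 {n : ℕ} (L : ℝ) (hL : 0 ≤ L) (k : ℕ) (hk1 : 1 ≤ k) (hkn : k ≤ n)
    (f : ℝ → (Fin n → ℝ) → ℝ) (hf : MemF L (0 : Fin n → ℝ) f)
    (hvanish : ∃ s₀ > (0 : ℝ), ∃ V ∈ 𝓝 (0 : Fin n → ℝ),
      ∀ s ∈ Ioo (0 : ℝ) s₀, ∀ μ ∈ V,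
        (∀ j : Fin n, k - 1 ≤ (j : ℕ) → μ j = 0) → f s μ = 0) :
    ∃ g : Fin n → ℝ → (Fin n → ℝ) → ℝ,
      (∀ i : Fin n, k - 1 ≤ (i : ℕ) → MemF L (0 : Fin n → ℝ) (g i)) ∧
      ∃ s₀ > (0 : ℝ), ∃ V ∈ 𝓝 (0 : Fin n → ℝ), ∀ s ∈ Ioo (0 : ℝ) s₀, ∀ μ ∈ V,
        f s μ = ∑ i ∈ Finset.univ.filter (fun i : Fin n => k - 1 ≤ (i : ℕ)),
          μ i * g i s μ := by
  classical
  obtain ⟨⟨s₁, hs₁, Vf, hVfopen, hVf0, hΦf⟩, hbd⟩ := hf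
  obtain ⟨sv, hsv, Vv, hVv, hvan⟩ := hvanish
  obtain ⟨rf, hrf, hrfV⟩ := Metric.isOpen_iff.1 hVfopen 0 hVf0
  obtain ⟨rv, hrv, hrvV⟩ := Metric.mem_nhds_iff.1 hVv
  set U : Set (ℝ × (Fin n → ℝ)) := Ioo 0 s₁ ×ˢ Metric.ball (0 : Fin n → ℝ) rf with hUdef
  have hUopen : IsOpen U := isOpen_Ioo.prod Metric.isOpen_ball
  have hstab : ∀ t ∈ Icc (0:ℝ) 1, ∀ q ∈ U, SL k t q ∈ U :=
    fun t ht q hq => SL_mem_region ht hq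
  have hΦfU : ContDiffOn ℝ (⊤ : ℕ∞) (uncur f) U :=
    hΦf.mono (Set.prod_mono (subset_refl _) hrfV)
  set g : Fin n → ℝ → (Fin n → ℝ) → ℝ :=
    fun i s μ => ∫ t in Ioc (0:ℝ) 1, uncur (pderivMu i f) (SL k t (s, μ)) with hgdef
  have hΨ₀ : ∀ i : Fin n, ContDiffOn ℝ (⊤ : ℕ∞)
      (Dv ((0:ℝ), Pi.single i (1:ℝ)) (uncur f)) U := fun i => dv_smooth hUopen hΦfU _
  have hbase : ∀ i : Fin n, EqOn (uncur (g i))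
      (Jc k (fun _ => (1:ℝ)) (Dv ((0:ℝ), Pi.single i (1:ℝ)) (uncur f))) U := by
    intro i q hq
    rw [Jc_apply]
    refine setIntegral_congr_fun measurableSet_Ioc fun t ht => ?_
    rw [one_mul]
    exact corrMu hUopen (fun _ _ => rfl) hΦfU i (hstab t (Ioc_subset_Icc_self ht) q hq)
  refine ⟨g, ?_, ?_⟩
  · -- each g i belongs to the class
    intro i _
    constructor
    · -- smoothness
      refine ⟨s₁, hs₁, Metric.ball 0 rf, Metric.isOpen_ball, Metric.mem_ball_self hrf, ?_⟩
      exact (Jc_smooth hUopen hstab continuous_const (hΨ₀ i)).congr (hbase i)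
    · -- derivative bounds
      intro l₀ l
      set l' : Fin n → ℕ := Function.update l i (l i + 1) with hl'def
      obtain ⟨Vb, hVb, C, sb, hsb, hC⟩ := hbd l₀ l'
      obtain ⟨rb, hrb, hrbV⟩ := Metric.mem_nhds_iff.1 hVb
      refine ⟨Metric.ball 0 (min rf rb), Metric.ball_mem_nhds 0 (lt_min hrf hrb), C,
        min s₁ sb, lt_min hs₁ hsb, ?_⟩
      obtain ⟨c', hc', hb', heq'⟩ := J_foldMu hUopen hstab (muflat l) (hbase i)
        continuous_const (hΨ₀ i)
      have heq2 := J_iterS hUopen hstab l₀ heq' hc'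
        (DL_smooth hUopen (hΨ₀ i) ((muflat l).map fun j => ((0:ℝ), Pi.single j (1:ℝ))))
      set Ψbig : ℝ × (Fin n → ℝ) → ℝ :=
        DL (List.replicate l₀ ((1:ℝ), (0 : Fin n → ℝ)))
          (DL ((muflat l).map fun j => ((0:ℝ), Pi.single j (1:ℝ)))
            (Dv ((0:ℝ), Pi.single i (1:ℝ)) (uncur f))) with hΨbigdef
      have hΨbig_smooth : ContDiffOn ℝ (⊤ : ℕ∞) Ψbig U :=
        DL_smooth hUopen (DL_smooth hUopen (hΨ₀ i) _) _
      have hΨbig_eq : ∀ p ∈ U, Ψbig p = pderivMulti l₀ l' f p.1 p.2 := by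
        intro p hp
        have h1 : Ψbig p = DL (canL l₀ l ++ [((0:ℝ), Pi.single i (1:ℝ))]) (uncur f) p := by
          rw [hΨbigdef, canL, List.append_assoc, DL_append, DL_append]
          rfl
        rw [h1, DL_perm hUopen hΦfU (canL_perm l₀ l i) hp]
        exact (corr_multi hUopen hΦfU l₀ l' hp).symm
      intro s hs μ hμ
      have hs' : s ∈ Ioo 0 s₁ := ⟨hs.1, hs.2.trans_le (min_le_left _ _)⟩
      have hμf : μ ∈ Metric.ball (0 : Fin n → ℝ) rf := by
        rw [mem_ball_zero_iff]
        exact lt_of_lt_of_le (mem_ball_zero_iff.1 hμ) (min_le_left _ _)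
      have hqU : ((s, μ) : ℝ × (Fin n → ℝ)) ∈ U := ⟨hs', hμf⟩
      have hval : pderivMulti l₀ l (g i) s μ
          = ∫ t in Ioc (0:ℝ) 1, c' t * Ψbig (SL k t (s, μ)) := by
        have h1 : pderivMulti l₀ l (g i) s μ
            = uncur (pderivS^[l₀] ((muflat l).foldr pderivMu (g i))) (s, μ) := by
          rw [pderivMulti_eq_foldr]; rfl
        rw [h1, heq2 hqU, Jc_apply]
      rw [hval]
      have hcontb : ContinuousOn (fun t => c' t * Ψbig (SL k t (s, μ))) (Icc (0:ℝ) 1) :=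
        hc'.continuousOn.mul ((hΨbig_smooth.continuousOn).comp
          ((continuous_SL k).clm_apply continuous_const).continuousOn
          fun t ht => hstab t ht _ hqU)
      have hmeas : AEStronglyMeasurable (fun t => c' t * Ψbig (SL k t (s, μ)))
          (volume.restrict (Ioc (0:ℝ) 1)) :=
        (hcontb.mono Ioc_subset_Icc_self).aestronglyMeasurable measurableSet_Ioc
      have hptbd : ∀ t ∈ Ioc (0:ℝ) 1,
          ‖c' t * Ψbig (SL k t (s, μ))‖ ≤ C * s ^ (L - (l₀ : ℝ)) := by
        intro t ht
        have htIcc : t ∈ Icc (0:ℝ) 1 := ⟨le_of_lt ht.1, ht.2⟩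
        have hpU : SL k t (s, μ) ∈ U := hstab t htIcc _ hqU
        have hΨval : Ψbig (SL k t (s, μ)) = pderivMulti l₀ l' f s (scaleL k t μ) :=
          hΨbig_eq _ hpU
        rw [Real.norm_eq_abs, abs_mul, hΨval]
        have hc1 : |c' t| ≤ 1 := by simpa using hb' t ht
        have hfb : |pderivMulti l₀ l' f s (scaleL k t μ)| ≤ C * s ^ (L - (l₀ : ℝ)) := by
          apply hC s ⟨hs.1, hs.2.trans_le (min_le_right _ _)⟩
          apply hrbV
          rw [mem_ball_zero_iff]
          exact lt_of_le_of_lt (norm_scaleL_apply_le k htIcc μ)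
            (lt_of_lt_of_le (mem_ball_zero_iff.1 hμ) (min_le_right _ _))
        calc |c' t| * |pderivMulti l₀ l' f s (scaleL k t μ)|
            ≤ 1 * (C * s ^ (L - (l₀ : ℝ))) :=
              mul_le_mul hc1 hfb (abs_nonneg _)
                zero_le_one
          _ = C * s ^ (L - (l₀ : ℝ)) := one_mul _
      calc |∫ t in Ioc (0:ℝ) 1, c' t * Ψbig (SL k t (s, μ))|
          = ‖∫ t in Ioc (0:ℝ) 1, c' t * Ψbig (SL k t (s, μ))‖ := (Real.norm_eq_abs _).symm
        _ ≤ (C * s ^ (L - (l₀ : ℝ))) * (volume (Ioc (0:ℝ) 1)).toReal :=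
            norm_setIntegral_le_of_norm_le_const (by simp [Real.volume_Ioc]) hptbd
        _ = C * s ^ (L - (l₀ : ℝ)) := by simp [Real.volume_Ioc]
  · -- the decomposition identity
    refine ⟨min s₁ sv, lt_min hs₁ hsv, Metric.ball 0 (min rf rv),
      Metric.ball_mem_nhds 0 (lt_min hrf hrv), ?_⟩
    intro s hs μ hμ
    have hs' : s ∈ Ioo 0 s₁ := ⟨hs.1, hs.2.trans_le (min_le_left _ _)⟩
    have hμf : μ ∈ Metric.ball (0 : Fin n → ℝ) rf := by
      rw [mem_ball_zero_iff]
      exact lt_of_lt_of_le (mem_ball_zero_iff.1 hμ) (min_le_left _ _)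
    have hqU : ((s, μ) : ℝ × (Fin n → ℝ)) ∈ U := ⟨hs', hμf⟩
    set T : Finset (Fin n) := Finset.univ.filter (fun i : Fin n => k - 1 ≤ (i : ℕ)) with hTdef
    set vtp : ℝ × (Fin n → ℝ) :=
      ((0:ℝ), fun j => if k - 1 ≤ (j : ℕ) then μ j else 0) with hvtpdef
    have htp : vtp = ∑ i ∈ T, μ i • (((0:ℝ), Pi.single i (1:ℝ)) : ℝ × (Fin n → ℝ)) := by
      rw [hvtpdef]
      ext
      · rw [Prod.fst_sum]
        simp
      · rename_i j
        rw [Prod.snd_sum]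
        simp only [Prod.smul_snd, Finset.sum_apply, Pi.smul_apply,
          Pi.single_apply, smul_eq_mul, mul_ite, mul_one, mul_zero]
        rw [Finset.sum_ite_eq T j (fun i => μ i)]
        simp [hTdef, Finset.mem_filter]
    have hcurve : ∀ t : ℝ, HasDerivAt (fun t => SL k t ((s, μ) : ℝ × (Fin n → ℝ))) vtp t := by
      intro t
      have h1 : HasDerivAt (fun t : ℝ => (SL k t ((s, μ) : ℝ × (Fin n → ℝ))).1) (0:ℝ) t :=
        hasDerivAt_const t s
      have h2 : HasDerivAt (fun t : ℝ => (SL k t ((s, μ) : ℝ × (Fin n → ℝ))).2)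
          (fun j => if k - 1 ≤ (j : ℕ) then μ j else 0) t := by
        rw [hasDerivAt_pi]
        intro j
        show HasDerivAt (fun t : ℝ => tw k t j * μ j) _ t
        by_cases hP : k - 1 ≤ (j : ℕ)
        · have he : (fun t : ℝ => tw k t j * μ j) = fun t : ℝ => t * μ j := by
            funext t; rw [tw, if_pos hP]
          rw [he, if_pos hP]
          simpa using (hasDerivAt_id t).mul_const (μ j)
        · have he : (fun t : ℝ => tw k t j * μ j) = fun _ : ℝ => 1 * μ j := by
            funext t; rw [tw, if_neg hP]
          rw [he, if_neg hP]
          exact hasDerivAt_const t _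
      exact h1.prodMk h2
    have hder : ∀ x ∈ uIcc (0:ℝ) 1,
        HasDerivAt (fun t => uncur f (SL k t ((s, μ) : ℝ × (Fin n → ℝ))))
          (fderiv ℝ (uncur f) (SL k x ((s, μ) : ℝ × (Fin n → ℝ))) vtp) x := by
      intro x hx
      have hx' : x ∈ Icc (0:ℝ) 1 := by rwa [uIcc_of_le zero_le_one] at hx
      exact (hasFDerivAt_of_smooth hUopen hΦfU (hstab x hx' _ hqU)).comp_hasDerivAt x (hcurve x)
    have hfd : ContinuousOn
        (fun t => fderiv ℝ (uncur f) (SL k t ((s, μ) : ℝ × (Fin n → ℝ)))) (Icc (0:ℝ) 1) :=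
      (hΦfU.continuousOn_fderiv_of_isOpen hUopen h1top').comp
        ((continuous_SL k).clm_apply continuous_const).continuousOn
        fun t ht => hstab t ht _ hqU
    have hInt : IntervalIntegrable
        (fun t => fderiv ℝ (uncur f) (SL k t ((s, μ) : ℝ × (Fin n → ℝ))) vtp)
        volume 0 1 := by
      apply ContinuousOn.intervalIntegrable
      rw [uIcc_of_le zero_le_one]
      exact isBoundedBilinearMap_apply.continuous.comp_continuousOn (hfd.prodMk continuousOn_const)
    have hzero : uncur f (SL k 0 ((s, μ) : ℝ × (Fin n → ℝ))) = 0 := by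
      apply hvan s ⟨hs.1, hs.2.trans_le (min_le_right _ _)⟩
      · apply hrvV
        rw [mem_ball_zero_iff]
        exact lt_of_le_of_lt (norm_scaleL_apply_le k ⟨le_refl 0, zero_le_one⟩ μ)
          (lt_of_lt_of_le (mem_ball_zero_iff.1 hμ) (min_le_right _ _))
      · intro j hj
        show tw k 0 j * μ j = 0
        rw [tw, if_pos hj, zero_mul]
    have hFTC : ∫ t in (0:ℝ)..1,
        fderiv ℝ (uncur f) (SL k t ((s, μ) : ℝ × (Fin n → ℝ))) vtp = f s μ := by
      rw [intervalIntegral.integral_eq_sub_of_hasDerivAt hder hInt]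
      rw [SL_one, hzero, sub_zero]
      rfl
    have hcontDv : ∀ i : Fin n, ContinuousOn
        (fun t => Dv ((0:ℝ), Pi.single i (1:ℝ)) (uncur f) (SL k t ((s, μ) : ℝ × (Fin n → ℝ))))
        (Icc (0:ℝ) 1) := fun i =>
      (hΨ₀ i).continuousOn.comp ((continuous_SL k).clm_apply continuous_const).continuousOn
        fun t ht => hstab t ht _ hqU
    have hg : ∀ i : Fin n, g i s μ = ∫ t in (0:ℝ)..1,
        Dv ((0:ℝ), Pi.single i (1:ℝ)) (uncur f) (SL k t ((s, μ) : ℝ × (Fin n → ℝ))) := by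
      intro i
      rw [intervalIntegral.integral_of_le zero_le_one]
      have h1 := hbase i hqU
      calc g i s μ = uncur (g i) (s, μ) := rfl
        _ = Jc k (fun _ => (1:ℝ)) (Dv ((0:ℝ), Pi.single i (1:ℝ)) (uncur f)) (s, μ) := h1
        _ = ∫ t in Ioc (0:ℝ) 1, Dv ((0:ℝ), Pi.single i (1:ℝ)) (uncur f)
              (SL k t ((s, μ) : ℝ × (Fin n → ℝ))) := by
            rw [Jc_apply]
            exact setIntegral_congr_fun measurableSet_Ioc fun t _ => one_mul _
    calc f s μ = ∫ t in (0:ℝ)..1,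
          fderiv ℝ (uncur f) (SL k t ((s, μ) : ℝ × (Fin n → ℝ))) vtp := hFTC.symm
      _ = ∫ t in (0:ℝ)..1, ∑ i ∈ T, μ i *
            Dv ((0:ℝ), Pi.single i (1:ℝ)) (uncur f) (SL k t ((s, μ) : ℝ × (Fin n → ℝ))) := by
          apply intervalIntegral.integral_congr
          intro t _
          rw [htp]
          refine (map_sum (fderiv ℝ (uncur f) (SL k t ((s, μ) : ℝ × (Fin n → ℝ)))) _ T).trans ?_
          exact Finset.sum_congr rfl fun i _ => by
            rw [ContinuousLinearMap.map_smul, smul_eq_mul]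
            rfl
      _ = ∑ i ∈ T, ∫ t in (0:ℝ)..1, μ i *
            Dv ((0:ℝ), Pi.single i (1:ℝ)) (uncur f) (SL k t ((s, μ) : ℝ × (Fin n → ℝ))) := by
          apply intervalIntegral.integral_finset_sum
          intro i _
          apply ContinuousOn.intervalIntegrable
          rw [uIcc_of_le zero_le_one]
          exact continuousOn_const.mul (hcontDv i)
      _ = ∑ i ∈ T, μ i * ∫ t in (0:ℝ)..1,
            Dv ((0:ℝ), Pi.single i (1:ℝ)) (uncur f) (SL k t ((s, μ) : ℝ × (Fin n → ℝ))) :=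
          Finset.sum_congr rfl fun i _ => intervalIntegral.integral_const_mul _ _
      _ = ∑ i ∈ T, μ i * g i s μ := Finset.sum_congr rfl fun i _ => by rw [hg i]
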